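/- A directed graph G is stable with respect to the representation M_u (equivalently, the unit η^{M_u,G} is an isomorphism) if and only if G is the graph of an equivalence relation on its node set: i.e., the relation {(∂₀(f), ∂₁(f)) : f an arc} is reflexive, symmetric, and transitive, and G has no parallel arcs. -/

import Mathlib

open CategoryTheory Limits Opposite WalkingParallelPair WalkingParallelPairHom

universe v w

section Machinery

variable {C : Type} [SmallCategory C] {D : Type w} [Category.{v} D]

/-- The diagram `Elts(G) → C → D` whose colimit is `G ⊗ M`. -/
def elemDiagram (M : C ⥤ D) (G : Cᵒᵖ ⥤ Type) : G.Elementsᵒᵖ ⥤ D :=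
  (CategoryOfElements.π G).leftOp ⋙ M

/-- `G ⊗ M`, the left Kan extension of `M` along Yoneda evaluated at `G`, computed as the
colimit of `M` over the category of elements of `G`. -/
noncomputable def tensorObj (M : C ⥤ D) (G : Cᵒᵖ ⥤ Type)
    [HasColimitsOfShape G.Elementsᵒᵖ D] : D :=
  colimit (elemDiagram M G)

/-- The colimit injection `μ^{M,G}_{(c,x)} : M(c) ⟶ G ⊗ M`. -/
noncomputable def tensorι (M : C ⥤ D) (G : Cᵒᵖ ⥤ Type)
    [HasColimitsOfShape G.Elementsᵒᵖ D] (c : C) (x : G.obj (op c)) :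
    M.obj c ⟶ tensorObj M G :=
  colimit.ι (elemDiagram M G) (op ⟨op c, x⟩)

/-- The diagram `Elts(y(c)) ≅ Over c → C → D` whose limit is the interface `Int_M(c)`. -/
def overDiagram (M : C ⥤ D) (c : C) : Over c ⥤ D :=
  Over.forget c ⋙ M

/-- The interface `Int_M(c)` of a representation `M` at `c`. -/
noncomputable def interfaceObj (M : C ⥤ D) [∀ c : C, HasLimitsOfShape (Over c) D] (c : C) : D :=
  limit (overDiagram M c)

/-- The limit projection `ν^{M,c}_{(c',f)} : Int_M(c) ⟶ M(c')`. -/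
noncomputable def interfaceπ (M : C ⥤ D) [∀ c : C, HasLimitsOfShape (Over c) D]
    {c' c : C} (f : c' ⟶ c) : interfaceObj M c ⟶ M.obj c' :=
  limit.π (overDiagram M c) (Over.mk f)

/-- The interface transformation `φ^{M,G}_c : G(c) → Hom_D(Int_M(c), G ⊗ M)`,
`x ↦ μ^{M,G}_{(c,x)} ∘ ν^{M,c}_{(c,id_c)}`. -/
noncomputable def interfaceTrans (M : C ⥤ D) (G : Cᵒᵖ ⥤ Type)
    [HasColimitsOfShape G.Elementsᵒᵖ D] [∀ c : C, HasLimitsOfShape (Over c) D]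
    (c : C) (x : G.obj (op c)) : interfaceObj M c ⟶ tensorObj M G :=
  interfaceπ M (𝟙 c) ≫ tensorι M G c x

end Machinery

section DirectedGraphs

/-- Arcs of a directed graph `G`, presented as a presheaf on the walking parallel pair. -/
abbrev arcs (G : WalkingParallelPairᵒᵖ ⥤ Type) : Type := G.obj (op one)

/-- Nodes of the directed graph `G`. -/
abbrev nodes (G : WalkingParallelPairᵒᵖ ⥤ Type) : Type := G.obj (op zero)

/-- The source map of `G`. -/
abbrev srcMap (G : WalkingParallelPairᵒᵖ ⥤ Type) : arcs G → nodes G :=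
  G.map (Quiver.Hom.op left)

/-- The target map of `G`. -/
abbrev tgtMap (G : WalkingParallelPairᵒᵖ ⥤ Type) : arcs G → nodes G :=
  G.map (Quiver.Hom.op right)

/-- The presheaf on `↑↑` (i.e. the directed graph) determined by source/target maps. -/
def dgPresheaf {A N : Type} (s t : A → N) : WalkingParallelPairᵒᵖ ⥤ Type :=
  walkingParallelPairOpEquiv.inverse ⋙ parallelPair (TypeCat.ofHom s) (TypeCat.ofHom t)

/-- A homomorphism of directed graphs, as a morphism of the associated presheaves. -/
def dgHom {A N A' N' : Type} (s t : A → N) (s' t' : A' → N')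
    (α : A → A') (ν : N → N') (hs : ∀ a, s' (α a) = ν (s a)) (ht : ∀ a, t' (α a) = ν (t a)) :
    dgPresheaf s t ⟶ dgPresheaf s' t' :=
  Functor.whiskerLeft walkingParallelPairOpEquiv.inverse
    (parallelPairHom (C := Type) (TypeCat.ofHom s) (TypeCat.ofHom t) (TypeCat.ofHom s')
      (TypeCat.ofHom t') (TypeCat.ofHom α) (TypeCat.ofHom ν)
      (by ext a; exact (hs a).symm) (by ext a; exact (ht a).symm))

end DirectedGraphs

/-- The representation `M_u` of `↑↑`: `M_u(0)` is the single-arrow graph `p₀ → p₁`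
(nodes `Bool`), `M_u(1)` is the graph `q₀ → q₁ ← q₂` (arcs `Bool`, `false = b₀`, `true = b₁`;
nodes `Fin 3`, `0 = q₀, 1 = q₁, 2 = q₂`), with `M_u(m₀) : a ↦ b₀` and `M_u(m₁) : a ↦ b₁`. -/
def Mu : WalkingParallelPair ⥤ (WalkingParallelPairᵒᵖ ⥤ Type) :=
  parallelPair
    (dgHom (fun _ : PUnit => false) (fun _ => true)
      (fun b : Bool => if b then (2 : Fin 3) else 0) (fun _ => 1)
      (fun _ => (false : Bool)) (fun b : Bool => if b then 1 else 0)
      (fun _ => rfl) (fun _ => rfl))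
    (dgHom (fun _ : PUnit => false) (fun _ => true)
      (fun b : Bool => if b then (2 : Fin 3) else 0) (fun _ => 1)
      (fun _ => (true : Bool)) (fun b : Bool => if b then 1 else 2)
      (fun _ => rfl) (fun _ => rfl))

/-- A directed graph `G` is stable with respect to a representation `M : ↑↑ ⥤ D` if the unit
`η^{M,G} : G ⟶ Hom_D(M(−), G ⊗ M)` of the adjunction `(−) ⊗ M ⊣ Hom_D(M(−), −)` is an
isomorphism, i.e. each component `x ↦ μ^{M,G}_{(c,x)}` is a bijection. -/
def IsStable {D : Type w} [Category.{v} D] [HasLimits D] [HasColimits D]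
    (M : WalkingParallelPair ⥤ D) (G : WalkingParallelPairᵒᵖ ⥤ Type) : Prop :=
  ∀ c : WalkingParallelPair,
    Function.Bijective (fun x : G.obj (op c) => tensorι M G c x)


namespace S16aux

open WalkingParallelPair WalkingParallelPairHom

variable (G : WalkingParallelPairᵒᵖ ⥤ Type)

/-- The arc relation on nodes. -/
abbrev Rel : nodes G → nodes G → Prop :=
  fun x y => ∃ f : arcs G, srcMap G f = x ∧ tgtMap G f = y

/-- Elements of `G`. -/
def el (c : WalkingParallelPair) (x : G.obj (op c)) : G.Elements := ⟨op c, x⟩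

def morL (f : arcs G) : el G one f ⟶ el G zero (srcMap G f) :=
  CategoryOfElements.homMk _ _ (Quiver.Hom.op left) rfl

def morR (f : arcs G) : el G one f ⟶ el G zero (tgtMap G f) :=
  CategoryOfElements.homMk _ _ (Quiver.Hom.op right) rfl

noncomputable abbrev ι0 (x : nodes G) : Mu.obj zero ⟶ tensorObj Mu G := tensorι Mu G zero x
noncomputable abbrev ι1 (f : arcs G) : Mu.obj one ⟶ tensorObj Mu G := tensorι Mu G one f

noncomputable def aN (x : nodes G) : arcs (tensorObj Mu G) :=
  (ι0 G x).app (op one) PUnit.unit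
noncomputable def nN (x : nodes G) (b : Bool) : nodes (tensorObj Mu G) :=
  (ι0 G x).app (op zero) b
noncomputable def aA (f : arcs G) (b : Bool) : arcs (tensorObj Mu G) :=
  (ι1 G f).app (op one) b
noncomputable def qN (f : arcs G) (i : Fin 3) : nodes (tensorObj Mu G) :=
  (ι1 G f).app (op zero) i

lemma wL (f : arcs G) : Mu.map left ≫ ι1 G f = ι0 G (srcMap G f) :=
  colimit.w (elemDiagram Mu G) (morL G f).op

lemma wR (f : arcs G) : Mu.map right ≫ ι1 G f = ι0 G (tgtMap G f) :=
  colimit.w (elemDiagram Mu G) (morR G f).op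

lemma aA_false (f : arcs G) : aA G f false = aN G (srcMap G f) :=
  (types_congr_hom (congrArg (fun (h : Mu.obj zero ⟶ tensorObj Mu G) => h.app (op one)) (wL G f))
    PUnit.unit)

lemma aA_true (f : arcs G) : aA G f true = aN G (tgtMap G f) :=
  (types_congr_hom (congrArg (fun (h : Mu.obj zero ⟶ tensorObj Mu G) => h.app (op one)) (wR G f))
    PUnit.unit)

lemma qN_zero (f : arcs G) : qN G f 0 = nN G (srcMap G f) false :=
  (types_congr_hom (congrArg (fun (h : Mu.obj zero ⟶ tensorObj Mu G) => h.app (op zero)) (wL G f))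
    false)

lemma qN_one_src (f : arcs G) : qN G f 1 = nN G (srcMap G f) true :=
  (types_congr_hom (congrArg (fun (h : Mu.obj zero ⟶ tensorObj Mu G) => h.app (op zero)) (wL G f))
    true)

lemma qN_two (f : arcs G) : qN G f 2 = nN G (tgtMap G f) false :=
  (types_congr_hom (congrArg (fun (h : Mu.obj zero ⟶ tensorObj Mu G) => h.app (op zero)) (wR G f))
    false)

lemma qN_one_tgt (f : arcs G) : qN G f 1 = nN G (tgtMap G f) true :=
  (types_congr_hom (congrArg (fun (h : Mu.obj zero ⟶ tensorObj Mu G) => h.app (op zero)) (wR G f))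
    true)

lemma nN_true_eq (f : arcs G) : nN G (srcMap G f) true = nN G (tgtMap G f) true :=
  (qN_one_src G f).symm.trans (qN_one_tgt G f)

lemma tgt_aN (x : nodes G) : tgtMap (tensorObj Mu G) (aN G x) = nN G x true :=
  (types_congr_hom ((ι0 G x).naturality (Quiver.Hom.op right)) PUnit.unit).symm

lemma src_aN (x : nodes G) : srcMap (tensorObj Mu G) (aN G x) = nN G x false :=
  (types_congr_hom ((ι0 G x).naturality (Quiver.Hom.op left)) PUnit.unit).symm

/-! ### The source/target invariant on arcs of the tensor -/

def legσ : ∀ c : WalkingParallelPair, G.obj (op c) → ((Mu.obj c).obj (op one) → nodes G)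
  | zero => fun x _ => x
  | one => fun f (b : Bool) => if b then tgtMap G f else srcMap G f

lemma legσ_nat {c c' : WalkingParallelPair} (g : c ⟶ c') (x : G.obj (op c'))
    (a : (Mu.obj c).obj (op one)) :
    legσ G c' x ((Mu.map g).app (op one) a) = legσ G c (G.map g.op x) a := by
  cases g using WalkingParallelPairHom.casesOn with
  | id =>
    have h : G.map (Quiver.Hom.op (WalkingParallelPairHom.id c)) x = x :=
      types_congr_hom (G.map_id (op c)) x
    rw [h]; rfl
  | left => rfl
  | right => rfl

noncomputable def σc : Cocone (elemDiagram Mu G ⋙ (evaluation WalkingParallelPairᵒᵖ Type).obj (op one)) where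
  pt := nodes G
  ι := {
    app := fun j => TypeCat.ofHom (legσ G (unop j).1.unop (unop j).2)
    naturality := by
      rintro ⟨⟨⟨c⟩, x⟩⟩ ⟨⟨⟨c'⟩, x'⟩⟩ ⟨⟨⟨g⟩, hg⟩⟩
      ext a
      have hg' : G.map g.op x' = x := hg
      have := legσ_nat G g x' a
      rw [hg'] at this
      exact this }

noncomputable def σdesc : arcs (tensorObj Mu G) → nodes G :=
  (isColimitOfPreserves ((evaluation WalkingParallelPairᵒᵖ Type).obj (op one))
    (colimit.isColimit (elemDiagram Mu G))).desc (σc G)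

lemma σ_aN (x : nodes G) : σdesc G (aN G x) = x :=
  types_congr_hom ((isColimitOfPreserves ((evaluation WalkingParallelPairᵒᵖ Type).obj (op one))
    (colimit.isColimit (elemDiagram Mu G))).fac (σc G) (op ⟨op zero, x⟩)) PUnit.unit

lemma aN_inj {x y : nodes G} (h : aN G x = aN G y) : x = y := by
  have := congrArg (σdesc G) h
  rwa [σ_aN, σ_aN] at this

/-! ### The node invariant (needs an equivalence relation compatible with arcs) -/

section Rho

variable (s : Setoid (nodes G))

def legρ : ∀ c : WalkingParallelPair, G.obj (op c) → ((Mu.obj c).obj (op zero) → (nodes G ⊕ Quotient s))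
  | zero => fun x (b : Bool) => if b then Sum.inr (Quotient.mk s x) else Sum.inl x
  | one => fun f (i : Fin 3) =>
      if i = 0 then Sum.inl (srcMap G f)
      else if i = 2 then Sum.inl (tgtMap G f)
      else Sum.inr (Quotient.mk s (srcMap G f))

lemma legρ_nat (hs' : ∀ f : arcs G, s.r (srcMap G f) (tgtMap G f))
    {c c' : WalkingParallelPair} (g : c ⟶ c') (x : G.obj (op c'))
    (a : (Mu.obj c).obj (op zero)) :
    legρ G s c' x ((Mu.map g).app (op zero) a) = legρ G s c (G.map g.op x) a := by
  cases g using WalkingParallelPairHom.casesOn with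
  | id =>
    have h : G.map (Quiver.Hom.op (WalkingParallelPairHom.id c)) x = x :=
      types_congr_hom (G.map_id (op c)) x
    rw [h]; rfl
  | left => cases (a : Bool) <;> rfl
  | right =>
    cases (a : Bool) with
    | false => rfl
    | true =>
      show Sum.inr (Quotient.mk s (srcMap G x)) = Sum.inr (Quotient.mk s (tgtMap G x))
      exact congrArg Sum.inr (Quotient.sound (hs' x))

noncomputable def ρc (hs' : ∀ f : arcs G, s.r (srcMap G f) (tgtMap G f)) : Cocone (elemDiagram Mu G ⋙ (evaluation WalkingParallelPairᵒᵖ Type).obj (op zero)) where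
  pt := nodes G ⊕ Quotient s
  ι := {
    app := fun j => TypeCat.ofHom (legρ G s (unop j).1.unop (unop j).2)
    naturality := by
      rintro ⟨⟨⟨c⟩, x⟩⟩ ⟨⟨⟨c'⟩, x'⟩⟩ ⟨⟨⟨g⟩, hg⟩⟩
      ext a
      have hg' : G.map g.op x' = x := hg
      have := legρ_nat G s hs' g x' a
      rw [hg'] at this
      exact this }

noncomputable def ρdesc (hs' : ∀ f : arcs G, s.r (srcMap G f) (tgtMap G f)) :
    nodes (tensorObj Mu G) → (nodes G ⊕ Quotient s) :=
  (isColimitOfPreserves ((evaluation WalkingParallelPairᵒᵖ Type).obj (op zero))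
    (colimit.isColimit (elemDiagram Mu G))).desc (ρc G s hs')

lemma ρ_nN (hs' : ∀ f : arcs G, s.r (srcMap G f) (tgtMap G f)) (x : nodes G) (b : Bool) :
    ρdesc G s hs' (nN G x b) = if b then Sum.inr (Quotient.mk s x) else Sum.inl x :=
  types_congr_hom ((isColimitOfPreserves ((evaluation WalkingParallelPairᵒᵖ Type).obj (op zero))
    (colimit.isColimit (elemDiagram Mu G))).fac (ρc G s hs') (op ⟨op zero, x⟩)) b

lemma ρ_qN (hs' : ∀ f : arcs G, s.r (srcMap G f) (tgtMap G f)) (f : arcs G) (i : Fin 3) :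
    ρdesc G s hs' (qN G f i) =
      (if i = 0 then Sum.inl (srcMap G f)
       else if i = 2 then Sum.inl (tgtMap G f)
       else Sum.inr (Quotient.mk s (srcMap G f))) :=
  types_congr_hom ((isColimitOfPreserves ((evaluation WalkingParallelPairᵒᵖ Type).obj (op zero))
    (colimit.isColimit (elemDiagram Mu G))).fac (ρc G s hs') (op ⟨op one, f⟩)) i

end Rho

/-! ### Homs out of `Mu 0` and `Mu 1` -/

section Homs

variable {P : WalkingParallelPairᵒᵖ ⥤ Type}

def hom0app (u : arcs P) : ∀ c : WalkingParallelPair, (Mu.obj zero).obj (op c) → P.obj (op c)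
  | one => fun _ => u
  | zero => fun (b : Bool) => if b then tgtMap P u else srcMap P u

def hom0 (u : arcs P) : Mu.obj zero ⟶ P where
  app X := TypeCat.ofHom (hom0app u X.unop)
  naturality := by
    rintro ⟨X⟩ ⟨Y⟩ ⟨g⟩
    cases g using WalkingParallelPairHom.casesOn with
    | id =>
      show (Mu.obj zero).map (𝟙 (op X)) ≫ TypeCat.ofHom (hom0app u X) = TypeCat.ofHom (hom0app u X) ≫ P.map (𝟙 (op X))
      rw [CategoryTheory.Functor.map_id, CategoryTheory.Functor.map_id]
      rfl
    | left => ext t; rfl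
    | right => ext t; rfl

theorem hom0_ext {h k : Mu.obj zero ⟶ P}
    (e : h.app (op one) PUnit.unit = k.app (op one) PUnit.unit) : h = k := by
  apply NatTrans.ext
  funext X
  obtain ⟨c⟩ := X
  cases c with
  | one => ext t; exact e
  | zero =>
    ext b
    have hl : h.app (op zero) false = P.map (Quiver.Hom.op left) (h.app (op one) PUnit.unit) :=
      types_congr_hom (h.naturality (Quiver.Hom.op left)) PUnit.unit
    have hr : h.app (op zero) true = P.map (Quiver.Hom.op right) (h.app (op one) PUnit.unit) :=
      types_congr_hom (h.naturality (Quiver.Hom.op right)) PUnit.unit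
    have kl : k.app (op zero) false = P.map (Quiver.Hom.op left) (k.app (op one) PUnit.unit) :=
      types_congr_hom (k.naturality (Quiver.Hom.op left)) PUnit.unit
    have kr : k.app (op zero) true = P.map (Quiver.Hom.op right) (k.app (op one) PUnit.unit) :=
      types_congr_hom (k.naturality (Quiver.Hom.op right)) PUnit.unit
    cases (b : Bool) with
    | false => exact hl.trans ((congrArg (P.map (Quiver.Hom.op left)) e).trans kl.symm)
    | true => exact hr.trans ((congrArg (P.map (Quiver.Hom.op right)) e).trans kr.symm)

def hom1app (u v : arcs P) : ∀ c : WalkingParallelPair, (Mu.obj one).obj (op c) → P.obj (op c)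
  | one => fun (b : Bool) => if b then v else u
  | zero => fun (i : Fin 3) =>
      if i = 0 then srcMap P u
      else if i = 2 then srcMap P v
      else tgtMap P u

def hom1 (u v : arcs P) (huv : tgtMap P u = tgtMap P v) : Mu.obj one ⟶ P where
  app X := TypeCat.ofHom (hom1app u v X.unop)
  naturality := by
    rintro ⟨X⟩ ⟨Y⟩ ⟨g⟩
    cases g using WalkingParallelPairHom.casesOn with
    | id =>
      show (Mu.obj one).map (𝟙 (op X)) ≫ TypeCat.ofHom (hom1app u v X) = TypeCat.ofHom (hom1app u v X) ≫ P.map (𝟙 (op X))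
      rw [CategoryTheory.Functor.map_id, CategoryTheory.Functor.map_id]
      rfl
    | left => ext b; cases b <;> rfl
    | right =>
      ext b
      cases b with
      | false => rfl
      | true => exact huv

theorem hom1_ext {h k : Mu.obj one ⟶ P}
    (e : ∀ b : Bool, h.app (op one) b = k.app (op one) b) : h = k := by
  apply NatTrans.ext
  funext X
  obtain ⟨c⟩ := X
  cases c with
  | one => ext b; exact e b
  | zero =>
    have hl : ∀ b : Bool, h.app (op zero) ((if b then 2 else 0 : Fin 3)) =
        P.map (Quiver.Hom.op left) (h.app (op one) b) :=
      fun b => types_congr_hom (h.naturality (Quiver.Hom.op left)) b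
    have hr : ∀ b : Bool, h.app (op zero) ((1 : Fin 3)) =
        P.map (Quiver.Hom.op right) (h.app (op one) b) :=
      fun b => types_congr_hom (h.naturality (Quiver.Hom.op right)) b
    have kl : ∀ b : Bool, k.app (op zero) ((if b then 2 else 0 : Fin 3)) =
        P.map (Quiver.Hom.op left) (k.app (op one) b) :=
      fun b => types_congr_hom (k.naturality (Quiver.Hom.op left)) b
    have kr : ∀ b : Bool, k.app (op zero) ((1 : Fin 3)) =
        P.map (Quiver.Hom.op right) (k.app (op one) b) :=
      fun b => types_congr_hom (k.naturality (Quiver.Hom.op right)) b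
    have key : ∀ i : Fin 3, h.app (op zero) i = k.app (op zero) i := by
      intro i
      fin_cases i
      · exact (hl false).trans
          ((congrArg (P.map (Quiver.Hom.op left)) (e false)).trans (kl false).symm)
      · exact (hr false).trans
          ((congrArg (P.map (Quiver.Hom.op right)) (e false)).trans (kr false).symm)
      · exact (hl true).trans
          ((congrArg (P.map (Quiver.Hom.op left)) (e true)).trans (kl true).symm)
    ext i
    exact key i

end Homs

/-! ### Joint surjectivity on arcs -/

lemma arc_rep (u : arcs (tensorObj Mu G)) : ∃ x : nodes G, u = aN G x := by
  obtain ⟨j, t, ht⟩ := Types.jointly_surjective _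
    (isColimitOfPreserves ((evaluation WalkingParallelPairᵒᵖ Type).obj (op one))
      (colimit.isColimit (elemDiagram Mu G))) u
  obtain ⟨⟨⟨c⟩, x⟩⟩ := j
  cases c with
  | zero => exact ⟨x, ht.symm⟩
  | one =>
    cases (t : Bool) with
    | false => exact ⟨srcMap G x, ht.symm.trans (aA_false G x)⟩
    | true => exact ⟨tgtMap G x, ht.symm.trans (aA_true G x)⟩

section RhoCor

variable (s : Setoid (nodes G)) (hs' : ∀ f : arcs G, s.r (srcMap G f) (tgtMap G f))

lemma ρ_nN_false (x : nodes G) : ρdesc G s hs' (nN G x false) = Sum.inl x := by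
  have := ρ_nN G s hs' x false
  simpa using this

lemma ρ_nN_true (x : nodes G) : ρdesc G s hs' (nN G x true) = Sum.inr (Quotient.mk s x) := by
  have := ρ_nN G s hs' x true
  simpa using this

lemma ρ_qN0 (f : arcs G) : ρdesc G s hs' (qN G f 0) = Sum.inl (srcMap G f) := by
  have := ρ_qN G s hs' f 0
  rwa [if_pos rfl] at this

lemma ρ_qN2 (f : arcs G) : ρdesc G s hs' (qN G f 2) = Sum.inl (tgtMap G f) := by
  have := ρ_qN G s hs' f 2
  rwa [if_neg (by decide), if_pos rfl] at this

end RhoCor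

end S16aux

/-- A directed graph `G` is stable with respect to the representation `M_u`
iff `G` is the graph of an equivalence relation on its node set: the relation
`{(∂₀ f, ∂₁ f) : f an arc}` is reflexive, symmetric and transitive, and `G` has no parallel
arcs. -/
theorem statement16 (G : WalkingParallelPairᵒᵖ ⥤ Type) :
    IsStable Mu G ↔
      (Reflexive (fun x y : nodes G => ∃ f : arcs G, srcMap G f = x ∧ tgtMap G f = y) ∧
       Symmetric (fun x y : nodes G => ∃ f : arcs G, srcMap G f = x ∧ tgtMap G f = y) ∧
       Transitive (fun x y : nodes G => ∃ f : arcs G, srcMap G f = x ∧ tgtMap G f = y) ∧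
       ∀ f g : arcs G, srcMap G f = srcMap G g → tgtMap G f = tgtMap G g → f = g) := by
  open S16aux in
  constructor
  · intro hst
    obtain ⟨hi1, hs1⟩ := hst one
    have appArc : ∀ {f : arcs G} {h : Mu.obj one ⟶ tensorObj Mu G},
        tensorι Mu G one f = h → ∀ b : Bool, aA G f b = h.app (op one) b := by
      intro f h hf b
      exact types_congr_hom (congrArg (fun (t : Mu.obj one ⟶ tensorObj Mu G) => t.app (op one)) hf) b
    refine ⟨?_, ?_, ?_, ?_⟩
    · -- Reflexive
      intro x
      obtain ⟨f, hf⟩ := hs1 (hom1 (aN G x) (aN G x) rfl)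
      have e0 : aN G (srcMap G f) = aN G x := (aA_false G f).symm.trans (appArc hf false)
      have e1 : aN G (tgtMap G f) = aN G x := (aA_true G f).symm.trans (appArc hf true)
      exact ⟨f, aN_inj G e0, aN_inj G e1⟩
    · -- Symmetric
      rintro x y ⟨f, hfs, hft⟩
      have huv : tgtMap (tensorObj Mu G) (aN G y) = tgtMap (tensorObj Mu G) (aN G x) := by
        rw [tgt_aN, tgt_aN, ← hfs, ← hft, nN_true_eq]
      obtain ⟨g, hg⟩ := hs1 (hom1 (aN G y) (aN G x) huv)
      have e0 : aN G (srcMap G g) = aN G y := (aA_false G g).symm.trans (appArc hg false)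
      have e1 : aN G (tgtMap G g) = aN G x := (aA_true G g).symm.trans (appArc hg true)
      exact ⟨g, aN_inj G e0, aN_inj G e1⟩
    · -- Transitive
      rintro x y z ⟨f, hfs, hft⟩ ⟨g, hgs, hgt⟩
      have huv : tgtMap (tensorObj Mu G) (aN G x) = tgtMap (tensorObj Mu G) (aN G z) := by
        rw [tgt_aN, tgt_aN, ← hfs, ← hgt, nN_true_eq G f, hft, ← hgs, nN_true_eq G g]
      obtain ⟨k, hk⟩ := hs1 (hom1 (aN G x) (aN G z) huv)
      have e0 : aN G (srcMap G k) = aN G x := (aA_false G k).symm.trans (appArc hk false)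
      have e1 : aN G (tgtMap G k) = aN G z := (aA_true G k).symm.trans (appArc hk true)
      exact ⟨k, aN_inj G e0, aN_inj G e1⟩
    · -- No parallel arcs
      intro f g h1 h2
      apply hi1
      show tensorι Mu G one f = tensorι Mu G one g
      apply hom1_ext
      intro b
      show aA G f b = aA G g b
      cases b with
      | false => rw [aA_false, aA_false, h1]
      | true => rw [aA_true, aA_true, h2]
  · rintro ⟨hR, hS, hT, hP⟩
    let s : Setoid (nodes G) :=
      ⟨fun x y => ∃ f : arcs G, srcMap G f = x ∧ tgtMap G f = y,
        ⟨hR, fun {x y} h => hS h, fun {x y z} h h' => hT h h'⟩⟩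
    have hs' : ∀ f : arcs G, s.r (srcMap G f) (tgtMap G f) := fun f => ⟨f, rfl, rfl⟩
    intro c
    cases c with
    | zero =>
      constructor
      · intro x y h
        have h' : nN G x false = nN G y false :=
          types_congr_hom (congrArg (fun (t : Mu.obj zero ⟶ tensorObj Mu G) => t.app (op zero)) h) false
        have e : (Sum.inl x : nodes G ⊕ Quotient s) = Sum.inl y :=
          (ρ_nN_false G s hs' x).symm.trans
            ((congrArg (ρdesc G s hs') h').trans (ρ_nN_false G s hs' y))
        exact Sum.inl.inj e
      · intro h
        obtain ⟨x, hx⟩ := arc_rep G (h.app (op one) PUnit.unit)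
        exact ⟨x, hom0_ext hx.symm⟩
    | one =>
      constructor
      · intro f g h
        have h0 : qN G f 0 = qN G g 0 :=
          types_congr_hom (congrArg (fun (t : Mu.obj one ⟶ tensorObj Mu G) => t.app (op zero)) h) ((0 : Fin 3) : (Mu.obj one).obj (op zero))
        have h2 : qN G f 2 = qN G g 2 :=
          types_congr_hom (congrArg (fun (t : Mu.obj one ⟶ tensorObj Mu G) => t.app (op zero)) h) ((2 : Fin 3) : (Mu.obj one).obj (op zero))
        have e0 : (Sum.inl (srcMap G f) : nodes G ⊕ Quotient s) = Sum.inl (srcMap G g) :=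
          (ρ_qN0 G s hs' f).symm.trans ((congrArg (ρdesc G s hs') h0).trans (ρ_qN0 G s hs' g))
        have e2 : (Sum.inl (tgtMap G f) : nodes G ⊕ Quotient s) = Sum.inl (tgtMap G g) :=
          (ρ_qN2 G s hs' f).symm.trans ((congrArg (ρdesc G s hs') h2).trans (ρ_qN2 G s hs' g))
        exact hP f g (Sum.inl.inj e0) (Sum.inl.inj e2)
      · intro h
        obtain ⟨x, hx⟩ := arc_rep G (h.app (op one) false)
        obtain ⟨y, hy⟩ := arc_rep G (h.app (op one) true)
        have n1 : h.app (op zero) (1 : Fin 3) =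
            tgtMap (tensorObj Mu G) (h.app (op one) false) :=
          types_congr_hom (h.naturality (Quiver.Hom.op right)) false
        have n2 : h.app (op zero) (1 : Fin 3) =
            tgtMap (tensorObj Mu G) (h.app (op one) true) :=
          types_congr_hom (h.naturality (Quiver.Hom.op right)) true
        have hxy : nN G x true = nN G y true := by
          rw [← tgt_aN, ← tgt_aN, ← hx, ← hy, ← n1, ← n2]
        have e : (Sum.inr (Quotient.mk s x) : nodes G ⊕ Quotient s) = Sum.inr (Quotient.mk s y) :=
          (ρ_nN_true G s hs' x).symm.trans
            ((congrArg (ρdesc G s hs') hxy).trans (ρ_nN_true G s hs' y))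
        obtain ⟨f, hfs, hft⟩ := Quotient.exact (Sum.inr.inj e)
        refine ⟨f, hom1_ext fun b => ?_⟩
        show aA G f b = h.app (op one) b
        cases b with
        | false => rw [aA_false, hfs, ← hx]
        | true => rw [aA_true, hft, ← hy]
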